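/- arXiv:2109.05546 — 3 statements merged into one kernel-verified Lean document; each statement's English description precedes it below -/
import Mathlib

section
/- Let Λ ∈ ℝ^{d×d} be symmetric positive definite, let φ₁,…,φ_n, x ∈ ℝ^d, and suppose Λ ⪰ Σ_{τ=1}^n φ_τ φ_τᵀ (i.e., Λ - Σ φ_τφ_τᵀ is positive semidefinite). Then Σ_{τ=1}^n |xᵀ Λ⁻¹ φ_τ| ≤ √(n · xᵀ Λ⁻¹ x). -/
open Matrix Finset

theorem stmt_3 {d n : ℕ} (Λ : Matrix (Fin d) (Fin d) ℝ) (hΛ : Λ.PosDef)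
    (φ : Fin n → Fin d → ℝ) (x : Fin d → ℝ)
    (hdom : (Λ - ∑ τ : Fin n, vecMulVec (φ τ) (φ τ)).PosSemidef) :
    ∑ τ : Fin n, |x ⬝ᵥ (Λ⁻¹ *ᵥ φ τ)| ≤ Real.sqrt (n * (x ⬝ᵥ (Λ⁻¹ *ᵥ x))) := by
  set y := Λ⁻¹ *ᵥ x with hy
  have hinv : Λ⁻¹.IsHermitian := hΛ.1.inv
  have hsymm : Λ⁻¹ᵀ = Λ⁻¹ := by
    have := hinv; rwa [Matrix.IsHermitian, conjTranspose_eq_transpose_of_trivial] at this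
  have hrw : ∀ τ, x ⬝ᵥ (Λ⁻¹ *ᵥ φ τ) = y ⬝ᵥ φ τ := by
    intro τ
    rw [dotProduct_mulVec, ← mulVec_transpose, hsymm]
  -- key: ∑ (y ⬝ᵥ φ τ)^2 ≤ x ⬝ᵥ y
  have hΛy : Λ *ᵥ y = x := by
    rw [hy, mulVec_mulVec, Matrix.mul_nonsing_inv _ hΛ.det_pos.ne'.isUnit, one_mulVec]
  have hquad : y ⬝ᵥ ((∑ τ : Fin n, vecMulVec (φ τ) (φ τ)) *ᵥ y) ≤ y ⬝ᵥ x := by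
    have h := hdom.dotProduct_mulVec_nonneg y
    rw [sub_mulVec, dotProduct_sub, hΛy] at h
    have : (0:ℝ) ≤ star y ⬝ᵥ x - star y ⬝ᵥ ((∑ τ : Fin n, vecMulVec (φ τ) (φ τ)) *ᵥ y) := by
      simpa using h
    simp only [star_trivial] at this
    linarith
  have hsum : ∑ τ : Fin n, (y ⬝ᵥ φ τ)^2 ≤ x ⬝ᵥ (Λ⁻¹ *ᵥ x) := by
    have hexp : y ⬝ᵥ ((∑ τ : Fin n, vecMulVec (φ τ) (φ τ)) *ᵥ y)
        = ∑ τ : Fin n, (y ⬝ᵥ φ τ)^2 := by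
      have hms : (∑ τ : Fin n, vecMulVec (φ τ) (φ τ)) *ᵥ y
          = ∑ τ : Fin n, (vecMulVec (φ τ) (φ τ)) *ᵥ y := by
        ext i
        simp [mulVec, dotProduct, Matrix.sum_apply, Finset.sum_apply, Finset.sum_mul]
        rw [Finset.sum_comm]
      rw [hms]
      have hds : y ⬝ᵥ (∑ τ : Fin n, vecMulVec (φ τ) (φ τ) *ᵥ y)
          = ∑ τ : Fin n, y ⬝ᵥ (vecMulVec (φ τ) (φ τ) *ᵥ y) := by
        simp [dotProduct, Finset.sum_apply, Finset.mul_sum]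
        rw [Finset.sum_comm]
      rw [hds]
      refine Finset.sum_congr rfl fun τ _ => ?_
      simp only [vecMulVec_apply, mulVec, dotProduct, sq, Finset.mul_sum, Finset.sum_mul]
      rw [Finset.sum_comm]
      refine Finset.sum_congr rfl fun i _ => Finset.sum_congr rfl fun j _ => by ring
    have : x ⬝ᵥ (Λ⁻¹ *ᵥ x) = y ⬝ᵥ x := by
      rw [hy, dotProduct_mulVec, ← mulVec_transpose, hsymm, dotProduct_comm]
    rw [this, ← hexp]
    exact hquad
  have hnn : (0:ℝ) ≤ x ⬝ᵥ (Λ⁻¹ *ᵥ x) :=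
    le_trans (Finset.sum_nonneg fun τ _ => sq_nonneg _) hsum
  -- Cauchy-Schwarz: (∑ |a τ|)^2 ≤ n * ∑ a τ ^ 2
  have hCS : (∑ τ : Fin n, |y ⬝ᵥ φ τ|)^2 ≤ n * ∑ τ : Fin n, (y ⬝ᵥ φ τ)^2 := by
    have h2 := sq_sum_le_card_mul_sum_sq (s := Finset.univ)
      (f := fun τ : Fin n => |y ⬝ᵥ φ τ|)
    simpa [sq_abs, Finset.card_univ] using h2
  calc ∑ τ : Fin n, |x ⬝ᵥ (Λ⁻¹ *ᵥ φ τ)|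
      = ∑ τ : Fin n, |y ⬝ᵥ φ τ| := by simp_rw [hrw]
    _ = Real.sqrt ((∑ τ : Fin n, |y ⬝ᵥ φ τ|)^2) := by
        rw [Real.sqrt_sq (Finset.sum_nonneg fun τ _ => abs_nonneg _)]
    _ ≤ Real.sqrt (n * (x ⬝ᵥ (Λ⁻¹ *ᵥ x))) := by
        apply Real.sqrt_le_sqrt
        calc (∑ τ : Fin n, |y ⬝ᵥ φ τ|)^2 ≤ n * ∑ τ : Fin n, (y ⬝ᵥ φ τ)^2 := hCS
          _ ≤ n * (x ⬝ᵥ (Λ⁻¹ *ᵥ x)) := by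
              apply mul_le_mul_of_nonneg_left hsum (Nat.cast_nonneg _)
end

section
/- Let d ≥ 1 and n ≥ 0 be natural numbers and l ≥ 1 a natural number. If n ≤ 2^{2l+3} d log(1 + n/(16d)), then n ≤ 40 · 4^l · d · l. -/
lemma log_one_add_le_two_sqrt {x : ℝ} (hx : 0 ≤ x) :
    Real.log (1 + x) ≤ 2 * Real.sqrt x := by
  have h1 : (0:ℝ) < 1 + x := by linarith
  have hs : Real.sqrt (1 + x) ≤ 1 + Real.sqrt x := by
    rw [show (1:ℝ) + Real.sqrt x = Real.sqrt ((1 + Real.sqrt x)^2) from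
      (Real.sqrt_sq (by positivity)).symm]
    apply Real.sqrt_le_sqrt
    nlinarith [Real.sq_sqrt hx, Real.sqrt_nonneg x]
  have h2 : Real.log (Real.sqrt (1 + x)) ≤ Real.sqrt (1 + x) - 1 :=
    Real.log_le_sub_one_of_pos (Real.sqrt_pos.mpr h1)
  rw [Real.log_sqrt h1.le] at h2
  linarith

theorem stmt_5 (d n l : ℕ) (hd : 1 ≤ d) (hl : 1 ≤ l)
    (h : (n : ℝ) ≤ 2 ^ (2 * l + 3) * d * Real.log (1 + n / (16 * d))) :
    (n : ℝ) ≤ 40 * 4 ^ l * d * l := by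
  have hd' : (1:ℝ) ≤ (d:ℝ) := by exact_mod_cast hd
  have hl' : (1:ℝ) ≤ (l:ℝ) := by exact_mod_cast hl
  have hdpos : (0:ℝ) < (d:ℝ) := by linarith
  have hn0 : (0:ℝ) ≤ (n:ℝ) := Nat.cast_nonneg n
  have hx : (0:ℝ) ≤ (n:ℝ) / (16 * d) := by positivity
  have hsd := Real.sqrt_nonneg (d:ℝ)
  have hsn := Real.sqrt_nonneg (n:ℝ)
  have hsd2 : Real.sqrt (d:ℝ) * Real.sqrt (d:ℝ) = (d:ℝ) :=
    Real.mul_self_sqrt hdpos.le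
  have hsn2 : Real.sqrt (n:ℝ) * Real.sqrt (n:ℝ) = (n:ℝ) :=
    Real.mul_self_sqrt hn0
  have hsd1 : (1:ℝ) ≤ Real.sqrt (d:ℝ) := by
    nlinarith [hsd2]
  -- rewrite sqrt of the quotient
  have hsq : Real.sqrt ((n:ℝ)/(16*d)) = Real.sqrt (n:ℝ) / (4 * Real.sqrt (d:ℝ)) := by
    rw [show (16:ℝ) * d = (4 * Real.sqrt (d:ℝ))^2 by nlinarith [hsd2]]
    rw [Real.sqrt_div hn0, Real.sqrt_sq (by positivity)]
  have hlog := log_one_add_le_two_sqrt hx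
  rw [hsq] at hlog
  have h4pos : (0:ℝ) < 4 * Real.sqrt (d:ℝ) := by linarith
  -- first bound: n ≤ 2^(2l+2) * sqrt d * sqrt n
  have hpow0 : (0:ℝ) < (2:ℝ)^(2*l+3) := by positivity
  have hstep1 : (n:ℝ) ≤ 2^(2*l+3) * d * (2 * (Real.sqrt (n:ℝ) / (4 * Real.sqrt (d:ℝ)))) := by
    calc (n:ℝ) ≤ 2 ^ (2 * l + 3) * d * Real.log (1 + n / (16 * d)) := h
    _ ≤ _ := by
        apply mul_le_mul_of_nonneg_left hlog (by positivity)
  have hstep1' : (n:ℝ) ≤ 2^(2*l+2) * Real.sqrt (d:ℝ) * Real.sqrt (n:ℝ) := by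
    have hrw : (2:ℝ)^(2*l+3) * d * (2 * (Real.sqrt (n:ℝ) / (4 * Real.sqrt (d:ℝ))))
        = 2^(2*l+2) * Real.sqrt (d:ℝ) * Real.sqrt (n:ℝ) := by
      rw [pow_succ]
      field_simp
      linear_combination (-(4 * Real.sqrt (n:ℝ))) * hsd2
    linarith [hrw ▸ hstep1]
  -- deduce sqrt n ≤ 2^(2l+2) * sqrt d
  have hsnle : Real.sqrt (n:ℝ) ≤ 2^(2*l+2) * Real.sqrt (d:ℝ) := by
    rcases eq_or_lt_of_le hsn with h0 | h0
    · rw [← h0]; positivity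
    · by_contra hc
      push_neg at hc
      have := mul_lt_mul_of_pos_right hc h0
      rw [hsn2] at this
      linarith [hstep1']
  have hnle : (n:ℝ) ≤ 2^(4*l+4) * d := by
    have := mul_le_mul hsnle hsnle hsn (by positivity)
    rw [hsn2] at this
    calc (n:ℝ) ≤ 2^(2*l+2) * Real.sqrt (d:ℝ) * (2^(2*l+2) * Real.sqrt (d:ℝ)) := this
    _ = 2^(4*l+4) * d := by
        rw [show 4*l+4 = (2*l+2)+(2*l+2) by ring, pow_add]
        linear_combination ((2:ℝ)^(2*l+2)*2^(2*l+2)) * hsd2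
  -- second bound on the log
  have hxle : (n:ℝ) / (16 * d) ≤ 2^(4*l) := by
    rw [div_le_iff₀ (by positivity)]
    calc (n:ℝ) ≤ 2^(4*l+4) * d := hnle
    _ = 2^(4*l) * (16 * d) := by rw [pow_add]; ring
  have hlog2 : Real.log (1 + (n:ℝ) / (16 * d)) ≤ (4*l+1) * Real.log 2 := by
    calc Real.log (1 + (n:ℝ) / (16 * d)) ≤ Real.log ((2:ℝ)^(4*l+1)) := by
          apply Real.log_le_log (by positivity)
          have h1 : (1:ℝ) ≤ 2^(4*l) := one_le_pow₀ (by norm_num)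
          calc (1:ℝ) + (n:ℝ)/(16*d) ≤ 2^(4*l) + 2^(4*l) := by linarith
          _ = 2^(4*l+1) := by rw [pow_succ]; ring
    _ = (4*l+1) * Real.log 2 := by
          rw [Real.log_pow]; push_cast; ring
  have hlog2' : Real.log 2 ≤ 1 := by
    have := Real.log_le_sub_one_of_pos (show (0:ℝ) < 2 by norm_num)
    linarith
  have hlogpos : (0:ℝ) ≤ Real.log 2 := Real.log_nonneg (by norm_num)
  calc (n:ℝ) ≤ 2 ^ (2 * l + 3) * d * Real.log (1 + n / (16 * d)) := h
  _ ≤ 2 ^ (2 * l + 3) * d * ((4*l+1) * Real.log 2) := by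
      apply mul_le_mul_of_nonneg_left hlog2 (by positivity)
  _ ≤ 2 ^ (2 * l + 3) * d * (5*l) := by
      apply mul_le_mul_of_nonneg_left _ (by positivity)
      calc ((4*l+1) : ℝ) * Real.log 2 ≤ (4*l+1) * 1 := by
            apply mul_le_mul_of_nonneg_left hlog2' (by positivity)
      _ ≤ 5*l := by push_cast; linarith
  _ = 40 * 4 ^ l * d * l := by
      rw [pow_add, pow_mul]; push_cast; ring
end

section
/- Let Λ = λI + Σ_{τ=1}^n φ_τφ_τᵀ be positive definite with λ > 0, let x ∈ ℝ^d, and let Δ_τ ∈ ℝ satisfy |Δ_τ| ≤ ε for all τ. Then |xᵀ Λ⁻¹ Σ_{τ=1}^n φ_τ Δ_τ| ≤ ε √(n · xᵀΛ⁻¹x). -/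
open Matrix Finset

private lemma dp_sum {d n : ℕ} (y : Fin d → ℝ) (v : Fin n → Fin d → ℝ) :
    y ⬝ᵥ (∑ τ, v τ) = ∑ τ, y ⬝ᵥ v τ := by
  simp only [dotProduct, Finset.sum_apply, Finset.mul_sum]
  rw [Finset.sum_comm]

private lemma sum_mv {d n : ℕ} (M : Fin n → Matrix (Fin d) (Fin d) ℝ) (y : Fin d → ℝ) :
    (∑ τ, M τ) *ᵥ y = ∑ τ, (M τ *ᵥ y) := by
  ext i
  simp only [mulVec, dotProduct, Finset.sum_apply, Matrix.sum_apply, Finset.sum_mul]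
  rw [Finset.sum_comm]

theorem stmt_13 {d n : ℕ} (lam : ℝ) (hlam : 0 < lam)
    (φ : Fin n → Fin d → ℝ) (Δ : Fin n → ℝ) (ε : ℝ)
    (hΔ : ∀ τ, |Δ τ| ≤ ε)
    (Λ : Matrix (Fin d) (Fin d) ℝ)
    (hΛdef : Λ = lam • 1 + ∑ τ : Fin n, vecMulVec (φ τ) (φ τ))
    (hΛ : Λ.PosDef) (x : Fin d → ℝ) :
    |x ⬝ᵥ (Λ⁻¹ *ᵥ (∑ τ : Fin n, Δ τ • φ τ))| ≤ ε * Real.sqrt (n * (x ⬝ᵥ (Λ⁻¹ *ᵥ x))) := by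
  -- symmetry of Λ and Λ⁻¹
  have hsym : Λᵀ = Λ := by
    rw [hΛdef, transpose_add, transpose_smul, transpose_one, transpose_sum]
    congr 1
    apply Finset.sum_congr rfl
    intro τ _
    ext i j
    simp [transpose_apply, vecMulVec_apply, mul_comm]
  have hsyminv : Λ⁻¹ᵀ = Λ⁻¹ := by rw [transpose_nonsing_inv, hsym]
  set y : Fin d → ℝ := Λ⁻¹ *ᵥ x with hy
  have hdot : ∀ v : Fin d → ℝ, x ⬝ᵥ (Λ⁻¹ *ᵥ v) = y ⬝ᵥ v := by
    intro v
    rw [dotProduct_mulVec, ← hsyminv, vecMul_transpose]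
  have hq0 : 0 ≤ x ⬝ᵥ (Λ⁻¹ *ᵥ x) := hΛ.inv.posSemidef.re_dotProduct_nonneg x
  cases n with
  | zero =>
    simp [hdot]
  | succ m =>
    have hε : 0 ≤ ε := le_trans (abs_nonneg _) (hΔ 0)
    set a : Fin (m+1) → ℝ := fun τ => y ⬝ᵥ φ τ with ha
    -- step 1: LHS ≤ ε * ∑ |a τ|
    have h1 : |x ⬝ᵥ (Λ⁻¹ *ᵥ (∑ τ, Δ τ • φ τ))| ≤ ε * ∑ τ, |a τ| := by
      rw [hdot, dp_sum]
      calc |∑ τ, y ⬝ᵥ (Δ τ • φ τ)| ≤ ∑ τ, |y ⬝ᵥ (Δ τ • φ τ)| :=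
            Finset.abs_sum_le_sum_abs _ _
        _ ≤ ∑ τ, ε * |a τ| := by
            apply Finset.sum_le_sum
            intro τ _
            rw [dotProduct_smul, smul_eq_mul, abs_mul]
            exact mul_le_mul_of_nonneg_right (hΔ τ) (abs_nonneg _)
        _ = ε * ∑ τ, |a τ| := by rw [Finset.mul_sum]
    -- step 2: Cauchy-Schwarz: (∑ |a|)² ≤ (m+1) * ∑ a²
    have h2 : (∑ τ, |a τ|) ^ 2 ≤ (m+1 : ℝ) * ∑ τ, a τ ^ 2 := by
      have := Finset.sum_mul_sq_le_sq_mul_sq Finset.univ (fun _ : Fin (m+1) => (1:ℝ))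
        (fun τ => |a τ|)
      simpa [sq_abs, Finset.card_univ] using this
    -- step 3: ∑ a² ≤ x ⬝ᵥ Λ⁻¹ x
    have h3 : ∑ τ, a τ ^ 2 ≤ x ⬝ᵥ (Λ⁻¹ *ᵥ x) := by
      have hmv : Λ *ᵥ y = x := by
        rw [hy, mulVec_mulVec, mul_nonsing_inv _ hΛ.det_pos.ne'.isUnit, one_mulVec]
      have hvmv : ∀ τ, (vecMulVec (φ τ) (φ τ)) *ᵥ y = (φ τ ⬝ᵥ y) • φ τ := by
        intro τ
        ext i
        simp [vecMulVec_apply, mulVec, dotProduct, Finset.sum_mul, Finset.mul_sum,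
          mul_assoc, mul_comm, mul_left_comm]
      have hexp : y ⬝ᵥ (Λ *ᵥ y) = lam * (y ⬝ᵥ y) + ∑ τ, a τ ^ 2 := by
        rw [hΛdef, add_mulVec, sum_mv, dotProduct_add, dp_sum]
        congr 1
        · simp [smul_mulVec, one_mulVec]
        · apply Finset.sum_congr rfl
          intro τ _
          rw [hvmv τ, dotProduct_smul, smul_eq_mul, ha, dotProduct_comm (φ τ) y, sq]
      have hyy : 0 ≤ lam * (y ⬝ᵥ y) := by
        have : (0:ℝ) ≤ y ⬝ᵥ y := by
          simpa [dotProduct, mul_self_nonneg] using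
            Finset.sum_nonneg (fun i _ => mul_self_nonneg (y i))
        positivity
      have : ∑ τ, a τ ^ 2 ≤ y ⬝ᵥ (Λ *ᵥ y) := by rw [hexp]; linarith
      calc ∑ τ, a τ ^ 2 ≤ y ⬝ᵥ (Λ *ᵥ y) := this
        _ = y ⬝ᵥ x := by rw [hmv]
        _ = x ⬝ᵥ (Λ⁻¹ *ᵥ x) := by rw [dotProduct_comm, hy]
    calc |x ⬝ᵥ (Λ⁻¹ *ᵥ (∑ τ, Δ τ • φ τ))| ≤ ε * ∑ τ, |a τ| := h1
      _ ≤ ε * Real.sqrt ((m+1 : ℝ) * (x ⬝ᵥ (Λ⁻¹ *ᵥ x))) := by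
          apply mul_le_mul_of_nonneg_left _ hε
          rw [← Real.sqrt_sq (Finset.sum_nonneg (fun τ _ => abs_nonneg (a τ)))]
          apply Real.sqrt_le_sqrt
          calc (∑ τ, |a τ|) ^ 2 ≤ (m+1 : ℝ) * ∑ τ, a τ ^ 2 := h2
            _ ≤ (m+1 : ℝ) * (x ⬝ᵥ (Λ⁻¹ *ᵥ x)) := by
                apply mul_le_mul_of_nonneg_left h3 (by positivity)
      _ = ε * Real.sqrt (↑(m+1) * (x ⬝ᵥ (Λ⁻¹ *ᵥ x))) := by norm_num
end
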